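/- The convergent of the continued fraction expansion of C₁₀ truncated immediately before coefficient number 18 (the high water mark of HWM number 5) has numerator 60499999499 and denominator 490050000000 = 4.9005·10^11: the 17th convergent numerator of GenContFract.of C₁₀ is 60499999499 and the 17th convergent denominator is 490050000000. -/

import Mathlib

/-- `pos n` is the position in the decimal expansion of Champernowne's constant
of the last digit of the integer `n`. -/
def pos (n : ℕ) : ℕ := ∑ k ∈ Finset.Icc 1 n, (Nat.digits 10 k).length

/-- Champernowne's constant in base ten. -/
noncomputable def C₁₀ : ℝ := ∑' n : ℕ, ((n + 1 : ℕ) : ℝ) / 10 ^ pos (n + 1)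

set_option maxRecDepth 16000
set_option maxHeartbeats 1600000


lemma pos_zero : pos 0 = 0 := by simp [pos]

lemma pos_succ (n : ℕ) : pos (n+1) = pos n + (Nat.digits 10 (n+1)).length := by
  unfold pos
  rw [Finset.sum_Icc_succ_top (by omega)]

lemma len_pos (n : ℕ) : 1 ≤ (Nat.digits 10 (n+1)).length :=
  List.length_pos_iff.mpr (Nat.digits_ne_nil_iff_ne_zero.mpr n.succ_ne_zero)

lemma pos_ge (n : ℕ) : n ≤ pos n := by
  induction n with
  | zero => simp [pos_zero]
  | succ n ih => rw [pos_succ]; have := len_pos n; omega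

lemma term_le (n : ℕ) : ((n+1:ℕ):ℝ) / 10 ^ pos (n+1) ≤ 1 / 10 ^ pos n := by
  have h1 : ((n+1:ℕ):ℝ) ≤ 10 ^ (Nat.digits 10 (n+1)).length := by
    exact_mod_cast (Nat.lt_base_pow_length_digits (by norm_num)).le
  rw [pos_succ, pow_add]
  rw [div_le_div_iff₀ (by positivity) (by positivity)]
  calc ((n+1:ℕ):ℝ) * 10 ^ pos n
      ≤ (10:ℝ) ^ (Nat.digits 10 (n+1)).length * 10 ^ pos n := by gcongr
    _ = 1 * ((10:ℝ) ^ pos n * 10 ^ (Nat.digits 10 (n+1)).length) := by ring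

lemma csummable : Summable (fun n : ℕ => ((n+1:ℕ):ℝ) / 10 ^ pos (n+1)) := by
  apply Summable.of_nonneg_of_le (fun n => by positivity)
    (fun n => (term_le n).trans ?_) (summable_geometric_of_lt_one (r := 1/10) (by norm_num) (by norm_num))
  rw [div_pow, one_pow]
  apply one_div_le_one_div_of_le (by positivity)
  exact pow_le_pow_right₀ (by norm_num) (pos_ge n)
lemma cpos1 : pos 1 = 1 := by rw [show (1:ℕ) = 0+1 by norm_num, pos_succ, pos_zero]; simp
lemma cpos2 : pos 2 = 2 := by rw [show (2:ℕ) = 1+1 by norm_num, pos_succ, cpos1]; simp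
lemma cpos3 : pos 3 = 3 := by rw [show (3:ℕ) = 2+1 by norm_num, pos_succ, cpos2]; simp
lemma cpos4 : pos 4 = 4 := by rw [show (4:ℕ) = 3+1 by norm_num, pos_succ, cpos3]; simp
lemma cpos5 : pos 5 = 5 := by rw [show (5:ℕ) = 4+1 by norm_num, pos_succ, cpos4]; simp
lemma cpos6 : pos 6 = 6 := by rw [show (6:ℕ) = 5+1 by norm_num, pos_succ, cpos5]; simp
lemma cpos7 : pos 7 = 7 := by rw [show (7:ℕ) = 6+1 by norm_num, pos_succ, cpos6]; simp
lemma cpos8 : pos 8 = 8 := by rw [show (8:ℕ) = 7+1 by norm_num, pos_succ, cpos7]; simp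
lemma cpos9 : pos 9 = 9 := by rw [show (9:ℕ) = 8+1 by norm_num, pos_succ, cpos8]; simp
lemma cpos10 : pos 10 = 11 := by rw [show (10:ℕ) = 9+1 by norm_num, pos_succ, cpos9]; simp
lemma cpos11 : pos 11 = 13 := by rw [show (11:ℕ) = 10+1 by norm_num, pos_succ, cpos10]; simp
lemma cpos12 : pos 12 = 15 := by rw [show (12:ℕ) = 11+1 by norm_num, pos_succ, cpos11]; simp
lemma cpos13 : pos 13 = 17 := by rw [show (13:ℕ) = 12+1 by norm_num, pos_succ, cpos12]; simp
lemma cpos14 : pos 14 = 19 := by rw [show (14:ℕ) = 13+1 by norm_num, pos_succ, cpos13]; simp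
lemma cpos15 : pos 15 = 21 := by rw [show (15:ℕ) = 14+1 by norm_num, pos_succ, cpos14]; simp
lemma cpos16 : pos 16 = 23 := by rw [show (16:ℕ) = 15+1 by norm_num, pos_succ, cpos15]; simp
lemma cpos17 : pos 17 = 25 := by rw [show (17:ℕ) = 16+1 by norm_num, pos_succ, cpos16]; simp
lemma cpos18 : pos 18 = 27 := by rw [show (18:ℕ) = 17+1 by norm_num, pos_succ, cpos17]; simp
lemma cpos19 : pos 19 = 29 := by rw [show (19:ℕ) = 18+1 by norm_num, pos_succ, cpos18]; simp
lemma cpos20 : pos 20 = 31 := by rw [show (20:ℕ) = 19+1 by norm_num, pos_succ, cpos19]; simp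
lemma cpos21 : pos 21 = 33 := by rw [show (21:ℕ) = 20+1 by norm_num, pos_succ, cpos20]; simp
lemma cpos22 : pos 22 = 35 := by rw [show (22:ℕ) = 21+1 by norm_num, pos_succ, cpos21]; simp
lemma cpos23 : pos 23 = 37 := by rw [show (23:ℕ) = 22+1 by norm_num, pos_succ, cpos22]; simp
lemma cpos24 : pos 24 = 39 := by rw [show (24:ℕ) = 23+1 by norm_num, pos_succ, cpos23]; simp
lemma cpos25 : pos 25 = 41 := by rw [show (25:ℕ) = 24+1 by norm_num, pos_succ, cpos24]; simp
lemma cpos26 : pos 26 = 43 := by rw [show (26:ℕ) = 25+1 by norm_num, pos_succ, cpos25]; simp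
lemma cpos27 : pos 27 = 45 := by rw [show (27:ℕ) = 26+1 by norm_num, pos_succ, cpos26]; simp
lemma cpos28 : pos 28 = 47 := by rw [show (28:ℕ) = 27+1 by norm_num, pos_succ, cpos27]; simp
lemma cpos29 : pos 29 = 49 := by rw [show (29:ℕ) = 28+1 by norm_num, pos_succ, cpos28]; simp
lemma cpos30 : pos 30 = 51 := by rw [show (30:ℕ) = 29+1 by norm_num, pos_succ, cpos29]; simp
lemma cpos31 : pos 31 = 53 := by rw [show (31:ℕ) = 30+1 by norm_num, pos_succ, cpos30]; simp
lemma cpos32 : pos 32 = 55 := by rw [show (32:ℕ) = 31+1 by norm_num, pos_succ, cpos31]; simp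
lemma cpos33 : pos 33 = 57 := by rw [show (33:ℕ) = 32+1 by norm_num, pos_succ, cpos32]; simp
lemma cpos34 : pos 34 = 59 := by rw [show (34:ℕ) = 33+1 by norm_num, pos_succ, cpos33]; simp
lemma cpos35 : pos 35 = 61 := by rw [show (35:ℕ) = 34+1 by norm_num, pos_succ, cpos34]; simp
lemma cpos36 : pos 36 = 63 := by rw [show (36:ℕ) = 35+1 by norm_num, pos_succ, cpos35]; simp
lemma cpos37 : pos 37 = 65 := by rw [show (37:ℕ) = 36+1 by norm_num, pos_succ, cpos36]; simp
lemma cpos38 : pos 38 = 67 := by rw [show (38:ℕ) = 37+1 by norm_num, pos_succ, cpos37]; simp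
lemma cpos39 : pos 39 = 69 := by rw [show (39:ℕ) = 38+1 by norm_num, pos_succ, cpos38]; simp
lemma cpos40 : pos 40 = 71 := by rw [show (40:ℕ) = 39+1 by norm_num, pos_succ, cpos39]; simp
lemma cpos41 : pos 41 = 73 := by rw [show (41:ℕ) = 40+1 by norm_num, pos_succ, cpos40]; simp
lemma cpos42 : pos 42 = 75 := by rw [show (42:ℕ) = 41+1 by norm_num, pos_succ, cpos41]; simp
lemma cpos43 : pos 43 = 77 := by rw [show (43:ℕ) = 42+1 by norm_num, pos_succ, cpos42]; simp
lemma cpos44 : pos 44 = 79 := by rw [show (44:ℕ) = 43+1 by norm_num, pos_succ, cpos43]; simp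
lemma cpos45 : pos 45 = 81 := by rw [show (45:ℕ) = 44+1 by norm_num, pos_succ, cpos44]; simp
lemma cpos46 : pos 46 = 83 := by rw [show (46:ℕ) = 45+1 by norm_num, pos_succ, cpos45]; simp
lemma cpos47 : pos 47 = 85 := by rw [show (47:ℕ) = 46+1 by norm_num, pos_succ, cpos46]; simp
lemma cpos48 : pos 48 = 87 := by rw [show (48:ℕ) = 47+1 by norm_num, pos_succ, cpos47]; simp
lemma cpos49 : pos 49 = 89 := by rw [show (49:ℕ) = 48+1 by norm_num, pos_succ, cpos48]; simp
lemma cpos50 : pos 50 = 91 := by rw [show (50:ℕ) = 49+1 by norm_num, pos_succ, cpos49]; simp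
lemma cpos51 : pos 51 = 93 := by rw [show (51:ℕ) = 50+1 by norm_num, pos_succ, cpos50]; simp
lemma cpos52 : pos 52 = 95 := by rw [show (52:ℕ) = 51+1 by norm_num, pos_succ, cpos51]; simp
lemma cpos53 : pos 53 = 97 := by rw [show (53:ℕ) = 52+1 by norm_num, pos_succ, cpos52]; simp
lemma cpos54 : pos 54 = 99 := by rw [show (54:ℕ) = 53+1 by norm_num, pos_succ, cpos53]; simp
lemma cpos55 : pos 55 = 101 := by rw [show (55:ℕ) = 54+1 by norm_num, pos_succ, cpos54]; simp
lemma cpos56 : pos 56 = 103 := by rw [show (56:ℕ) = 55+1 by norm_num, pos_succ, cpos55]; simp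
lemma cpos57 : pos 57 = 105 := by rw [show (57:ℕ) = 56+1 by norm_num, pos_succ, cpos56]; simp
lemma cpos58 : pos 58 = 107 := by rw [show (58:ℕ) = 57+1 by norm_num, pos_succ, cpos57]; simp
lemma cpos59 : pos 59 = 109 := by rw [show (59:ℕ) = 58+1 by norm_num, pos_succ, cpos58]; simp
lemma cpos60 : pos 60 = 111 := by rw [show (60:ℕ) = 59+1 by norm_num, pos_succ, cpos59]; simp
lemma cpos61 : pos 61 = 113 := by rw [show (61:ℕ) = 60+1 by norm_num, pos_succ, cpos60]; simp
lemma cpos62 : pos 62 = 115 := by rw [show (62:ℕ) = 61+1 by norm_num, pos_succ, cpos61]; simp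
lemma cpos63 : pos 63 = 117 := by rw [show (63:ℕ) = 62+1 by norm_num, pos_succ, cpos62]; simp
lemma cpos64 : pos 64 = 119 := by rw [show (64:ℕ) = 63+1 by norm_num, pos_succ, cpos63]; simp
lemma cpos65 : pos 65 = 121 := by rw [show (65:ℕ) = 64+1 by norm_num, pos_succ, cpos64]; simp
lemma cpos66 : pos 66 = 123 := by rw [show (66:ℕ) = 65+1 by norm_num, pos_succ, cpos65]; simp
lemma cpos67 : pos 67 = 125 := by rw [show (67:ℕ) = 66+1 by norm_num, pos_succ, cpos66]; simp
lemma cpos68 : pos 68 = 127 := by rw [show (68:ℕ) = 67+1 by norm_num, pos_succ, cpos67]; simp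
lemma cpos69 : pos 69 = 129 := by rw [show (69:ℕ) = 68+1 by norm_num, pos_succ, cpos68]; simp
lemma cpos70 : pos 70 = 131 := by rw [show (70:ℕ) = 69+1 by norm_num, pos_succ, cpos69]; simp
lemma cpos71 : pos 71 = 133 := by rw [show (71:ℕ) = 70+1 by norm_num, pos_succ, cpos70]; simp
lemma cpos72 : pos 72 = 135 := by rw [show (72:ℕ) = 71+1 by norm_num, pos_succ, cpos71]; simp
lemma cpos73 : pos 73 = 137 := by rw [show (73:ℕ) = 72+1 by norm_num, pos_succ, cpos72]; simp
lemma cpos74 : pos 74 = 139 := by rw [show (74:ℕ) = 73+1 by norm_num, pos_succ, cpos73]; simp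
lemma cpos75 : pos 75 = 141 := by rw [show (75:ℕ) = 74+1 by norm_num, pos_succ, cpos74]; simp
lemma cpos76 : pos 76 = 143 := by rw [show (76:ℕ) = 75+1 by norm_num, pos_succ, cpos75]; simp
lemma cpos77 : pos 77 = 145 := by rw [show (77:ℕ) = 76+1 by norm_num, pos_succ, cpos76]; simp
lemma cpos78 : pos 78 = 147 := by rw [show (78:ℕ) = 77+1 by norm_num, pos_succ, cpos77]; simp
lemma cpos79 : pos 79 = 149 := by rw [show (79:ℕ) = 78+1 by norm_num, pos_succ, cpos78]; simp
lemma cpos80 : pos 80 = 151 := by rw [show (80:ℕ) = 79+1 by norm_num, pos_succ, cpos79]; simp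
lemma cpos81 : pos 81 = 153 := by rw [show (81:ℕ) = 80+1 by norm_num, pos_succ, cpos80]; simp
lemma cpos82 : pos 82 = 155 := by rw [show (82:ℕ) = 81+1 by norm_num, pos_succ, cpos81]; simp
lemma cpos83 : pos 83 = 157 := by rw [show (83:ℕ) = 82+1 by norm_num, pos_succ, cpos82]; simp
lemma cpos84 : pos 84 = 159 := by rw [show (84:ℕ) = 83+1 by norm_num, pos_succ, cpos83]; simp
lemma cpos85 : pos 85 = 161 := by rw [show (85:ℕ) = 84+1 by norm_num, pos_succ, cpos84]; simp
lemma cpos86 : pos 86 = 163 := by rw [show (86:ℕ) = 85+1 by norm_num, pos_succ, cpos85]; simp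
lemma cpos87 : pos 87 = 165 := by rw [show (87:ℕ) = 86+1 by norm_num, pos_succ, cpos86]; simp
lemma cpos88 : pos 88 = 167 := by rw [show (88:ℕ) = 87+1 by norm_num, pos_succ, cpos87]; simp
lemma cpos89 : pos 89 = 169 := by rw [show (89:ℕ) = 88+1 by norm_num, pos_succ, cpos88]; simp
lemma cpos90 : pos 90 = 171 := by rw [show (90:ℕ) = 89+1 by norm_num, pos_succ, cpos89]; simp
lemma cpos91 : pos 91 = 173 := by rw [show (91:ℕ) = 90+1 by norm_num, pos_succ, cpos90]; simp
lemma cpos92 : pos 92 = 175 := by rw [show (92:ℕ) = 91+1 by norm_num, pos_succ, cpos91]; simp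
lemma cpos93 : pos 93 = 177 := by rw [show (93:ℕ) = 92+1 by norm_num, pos_succ, cpos92]; simp
lemma cpos94 : pos 94 = 179 := by rw [show (94:ℕ) = 93+1 by norm_num, pos_succ, cpos93]; simp
lemma cpos95 : pos 95 = 181 := by rw [show (95:ℕ) = 94+1 by norm_num, pos_succ, cpos94]; simp
lemma cpos96 : pos 96 = 183 := by rw [show (96:ℕ) = 95+1 by norm_num, pos_succ, cpos95]; simp
lemma cpos97 : pos 97 = 185 := by rw [show (97:ℕ) = 96+1 by norm_num, pos_succ, cpos96]; simp
lemma cpos98 : pos 98 = 187 := by rw [show (98:ℕ) = 97+1 by norm_num, pos_succ, cpos97]; simp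
lemma cpos99 : pos 99 = 189 := by rw [show (99:ℕ) = 98+1 by norm_num, pos_succ, cpos98]; simp
lemma cpos100 : pos 100 = 192 := by rw [show (100:ℕ) = 99+1 by norm_num, pos_succ, cpos99]; simp
lemma cpos101 : pos 101 = 195 := by rw [show (101:ℕ) = 100+1 by norm_num, pos_succ, cpos100]; simp
lemma cpos102 : pos 102 = 198 := by rw [show (102:ℕ) = 101+1 by norm_num, pos_succ, cpos101]; simp
lemma cpos103 : pos 103 = 201 := by rw [show (103:ℕ) = 102+1 by norm_num, pos_succ, cpos102]; simp
lemma cpos104 : pos 104 = 204 := by rw [show (104:ℕ) = 103+1 by norm_num, pos_succ, cpos103]; simp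
lemma cpos105 : pos 105 = 207 := by rw [show (105:ℕ) = 104+1 by norm_num, pos_succ, cpos104]; simp
lemma cpos106 : pos 106 = 210 := by rw [show (106:ℕ) = 105+1 by norm_num, pos_succ, cpos105]; simp
lemma cpos107 : pos 107 = 213 := by rw [show (107:ℕ) = 106+1 by norm_num, pos_succ, cpos106]; simp
lemma cpos108 : pos 108 = 216 := by rw [show (108:ℕ) = 107+1 by norm_num, pos_succ, cpos107]; simp
lemma cpos109 : pos 109 = 219 := by rw [show (109:ℕ) = 108+1 by norm_num, pos_succ, cpos108]; simp
lemma cpos110 : pos 110 = 222 := by rw [show (110:ℕ) = 109+1 by norm_num, pos_succ, cpos109]; simp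

lemma partial_val : (∑ n ∈ Finset.range 110, ((n+1:ℕ):ℚ) / 10 ^ pos (n+1)) = 123456789101112131415161718192021222324252627282930313233343536373839404142434445464748495051525354555657585960616263646566676869707172737475767778798081828384858687888990919293949596979899100101102103104105106107108109110 / 10^222 := by
  norm_num [Finset.sum_range_succ, cpos1, cpos2, cpos3, cpos4, cpos5, cpos6, cpos7, cpos8, cpos9, cpos10, cpos11, cpos12, cpos13, cpos14, cpos15, cpos16, cpos17, cpos18, cpos19, cpos20, cpos21, cpos22, cpos23, cpos24, cpos25, cpos26, cpos27, cpos28, cpos29, cpos30, cpos31, cpos32, cpos33, cpos34, cpos35, cpos36, cpos37, cpos38, cpos39, cpos40, cpos41, cpos42, cpos43, cpos44, cpos45, cpos46, cpos47, cpos48, cpos49, cpos50, cpos51, cpos52, cpos53, cpos54, cpos55, cpos56, cpos57, cpos58, cpos59, cpos60, cpos61, cpos62, cpos63, cpos64, cpos65, cpos66, cpos67, cpos68, cpos69, cpos70, cpos71, cpos72, cpos73, cpos74, cpos75, cpos76, cpos77, cpos78, cpos79, cpos80, cpos81, cpos82, cpos83, cpos84, cpos85, cpos86, cpos87, cpos88,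 cpos89, cpos90, cpos91, cpos92, cpos93, cpos94, cpos95, cpos96, cpos97, cpos98, cpos99, cpos100, cpos101, cpos102, cpos103, cpos104, cpos105, cpos106, cpos107, cpos108, cpos109, cpos110]


lemma partial_real : (∑ n ∈ Finset.range 110, ((n+1:ℕ):ℝ) / 10 ^ pos (n+1)) = (((123456789101112131415161718192021222324252627282930313233343536373839404142434445464748495051525354555657585960616263646566676869707172737475767778798081828384858687888990919293949596979899100101102103104105106107108109110:ℚ)/10^222 : ℚ) : ℝ) := by
  rw [← partial_val]
  push_cast
  rfl


open GenContFract in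
lemma cf_step {x y : ℝ} {k : ℕ} {m m' : ℤ} {a b a' b' : ℚ}
    (hs : IntFractPair.stream x k = some ⟨m, y⟩)
    (ha : (a:ℝ) ≤ y) (hb : y ≤ (b:ℝ)) (ha0 : 0 < a)
    (h1 : (m':ℚ) * b ≤ 1) (h2 : 1 < ((m':ℚ) + 1) * a)
    (h3 : (a' + (m':ℚ)) * b ≤ 1) (h4 : 1 ≤ (b' + (m':ℚ)) * a) :
    IntFractPair.stream x (k+1) = some ⟨m', y⁻¹ - m'⟩ ∧
      ((a':ℚ):ℝ) ≤ y⁻¹ - (m':ℝ) ∧ y⁻¹ - (m':ℝ) ≤ ((b':ℚ):ℝ) := by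
  have ha0' : (0:ℝ) < (a:ℚ) := by exact_mod_cast ha0
  have hy0 : (0:ℝ) < y := lt_of_lt_of_le ha0' ha
  have hb0' : (0:ℝ) < (b:ℚ) := lt_of_lt_of_le hy0 hb
  have hb0 : (0:ℚ) < b := by exact_mod_cast hb0'
  have hinv_lb : (1:ℝ) / (b:ℚ) ≤ y⁻¹ := by
    rw [one_div]; exact inv_anti₀ hy0 hb
  have hinv_ub : y⁻¹ ≤ (1:ℝ) / (a:ℚ) := by
    rw [one_div]; exact inv_anti₀ ha0' ha
  have q1 : ((m':ℚ):ℝ) ≤ 1 / (b:ℚ) := by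
    have : (m':ℚ) ≤ 1 / b := (le_div_iff₀ hb0).mpr h1
    exact_mod_cast this
  have q2 : ((1:ℚ):ℝ) / (a:ℚ) < ((m':ℚ):ℝ) + 1 := by
    have : 1 / a < (m':ℚ) + 1 := (div_lt_iff₀ ha0).mpr h2
    exact_mod_cast this
  have q3 : ((a':ℚ):ℝ) + ((m':ℚ):ℝ) ≤ 1 / (b:ℚ) := by
    have : a' + (m':ℚ) ≤ 1 / b := (le_div_iff₀ hb0).mpr h3
    exact_mod_cast this
  have q4 : ((1:ℚ):ℝ) / (a:ℚ) ≤ ((b':ℚ):ℝ) + ((m':ℚ):ℝ) := by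
    have : 1 / a ≤ b' + (m':ℚ) := (div_le_iff₀ ha0).mpr h4
    exact_mod_cast this
  have hcast : ((m':ℚ):ℝ) = (m':ℝ) := by push_cast; ring
  rw [hcast] at q1 q2 q3 q4
  have hfloor : ⌊y⁻¹⌋ = m' := by
    rw [Int.floor_eq_iff]
    constructor
    · exact le_trans q1 hinv_lb
    · calc y⁻¹ ≤ (1:ℝ) / (a:ℚ) := hinv_ub
        _ < (m':ℝ) + 1 := by exact_mod_cast q2
  have hstep := GenContFract.IntFractPair.stream_succ_of_some hs (by exact hy0.ne' : (⟨m, y⟩ : IntFractPair ℝ).fr ≠ 0)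
  refine ⟨?_, ?_, ?_⟩
  · rw [hstep]
    congr 1
    rw [GenContFract.IntFractPair.of, Int.fract, hfloor]
  · linarith
  · linarith


lemma C_lb : ((((123456789101112131415161718192021222324252627282930313233343536373839404142434445464748495051525354555657585960616263646566676869707172737475767778798081828384858687888990919293949596979899100101102103104105106107108109110:ℚ)/10^222) : ℚ):ℝ) ≤ C₁₀ := by
  rw [show C₁₀ = ∑' n : ℕ, ((n + 1 : ℕ) : ℝ) / 10 ^ pos (n + 1) from rfl, ← partial_real]
  exact Summable.sum_le_tsum _ (fun i _ => by positivity) csummable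

lemma C_ub : C₁₀ ≤ ((((123456789101112131415161718192021222324252627282930313233343536373839404142434445464748495051525354555657585960616263646566676869707172737475767778798081828384858687888990919293949596979899100101102103104105106107108109112:ℚ)/10^222) : ℚ):ℝ) := by
  have hsplit := Summable.sum_add_tsum_nat_add (f := fun n : ℕ => ((n+1:ℕ):ℝ)/10^pos (n+1)) 110 csummable
  have posadd : ∀ i:ℕ, 222 + i ≤ pos (i+110) := by
    intro i; induction i with
    | zero => simpa using cpos110.ge
    | succ i ih => rw [show i+1+110 = (i+110)+1 by ring, pos_succ]; have := len_pos (i+110); omega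
  have hterm : ∀ i:ℕ, ((i+110+1:ℕ):ℝ)/10^pos (i+110+1) ≤ ((1:ℝ)/10^222) * (1/10:ℝ)^i := by
    intro i
    refine (term_le (i+110)).trans ?_
    rw [div_pow, one_pow, div_mul_div_comm, one_mul, ← pow_add]
    apply one_div_le_one_div_of_le (by positivity)
    exact pow_le_pow_right₀ (by norm_num) (posadd i)
  have h1 : (∑' i:ℕ, ((i+110+1:ℕ):ℝ)/10^pos (i+110+1)) ≤ ∑' i:ℕ, ((1:ℝ)/10^222)*(1/10:ℝ)^i :=
    Summable.tsum_le_tsum hterm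
      ((summable_nat_add_iff (f := fun n : ℕ => ((n+1:ℕ):ℝ)/10^pos (n+1)) 110).2 csummable)
      (Summable.mul_left _ (summable_geometric_of_lt_one (by norm_num) (by norm_num)))
  have h2 : (∑' i:ℕ, ((1:ℝ)/10^222)*(1/10:ℝ)^i) = ((1:ℝ)/10^222)*((1:ℝ)-1/10)⁻¹ := by
    rw [tsum_mul_left, tsum_geometric_of_lt_one (by norm_num) (by norm_num)]
  have h3 : C₁₀ ≤ (((((123456789101112131415161718192021222324252627282930313233343536373839404142434445464748495051525354555657585960616263646566676869707172737475767778798081828384858687888990919293949596979899100101102103104105106107108109110:ℚ)/10^222) : ℚ)):ℝ) + ((1:ℝ)/10^222)*((1:ℝ)-1/10)⁻¹ := by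
    rw [show C₁₀ = ∑' n : ℕ, ((n + 1 : ℕ) : ℝ) / 10 ^ pos (n + 1) from rfl, ← hsplit, partial_real]
    have h1' := h1
    rw [h2] at h1'
    linarith
  refine h3.trans ?_
  have h4 : ((1:ℝ)/10^222)*((1:ℝ)-1/10)⁻¹ ≤ ((2/10^222 : ℚ):ℝ) := by
    push_cast
    rw [div_mul_eq_mul_div, div_le_div_iff₀ (by positivity) (by positivity)]
    norm_num
  have h5 : (((((123456789101112131415161718192021222324252627282930313233343536373839404142434445464748495051525354555657585960616263646566676869707172737475767778798081828384858687888990919293949596979899100101102103104105106107108109110:ℚ)/10^222) : ℚ)):ℝ) + ((2/10^222 : ℚ):ℝ) = (((((123456789101112131415161718192021222324252627282930313233343536373839404142434445464748495051525354555657585960616263646566676869707172737475767778798081828384858687888990919293949596979899100101102103104105106107108109112:ℚ)/10^222) : ℚ)):ℝ) := by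
    rw [← Rat.cast_add]
    congr 1
    rw [← add_div]
    norm_num
  linarith

lemma floor0 : ⌊C₁₀⌋ = 0 := by
  have h1 := C_lb; have h2 := C_ub
  rw [Int.floor_eq_iff]
  constructor
  · refine le_trans ?_ h1
    rw [show ((0:ℤ):ℝ) = ((0:ℚ):ℝ) by norm_num]
    exact_mod_cast (by norm_num : (0:ℚ) ≤ (123456789101112131415161718192021222324252627282930313233343536373839404142434445464748495051525354555657585960616263646566676869707172737475767778798081828384858687888990919293949596979899100101102103104105106107108109110:ℚ)/10^222)
  · refine lt_of_le_of_lt h2 ?_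
    rw [show ((0:ℤ):ℝ)+1 = ((1:ℚ):ℝ) by norm_num]
    exact_mod_cast (by norm_num : ((123456789101112131415161718192021222324252627282930313233343536373839404142434445464748495051525354555657585960616263646566676869707172737475767778798081828384858687888990919293949596979899100101102103104105106107108109112:ℚ))/10^222 < 1)

open GenContFract in
lemma stream0 : IntFractPair.stream C₁₀ 0 = some ⟨0, C₁₀⟩ := by
  rw [GenContFract.IntFractPair.stream_zero]
  congr 1
  rw [GenContFract.IntFractPair.of, Int.fract, floor0]
  norm_num

theorem convergent_before_hwm5 :
    (GenContFract.of C₁₀).nums 17 = 60499999499 ∧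
    (GenContFract.of C₁₀).dens 17 = 490050000000 := by
  have hs0 := stream0
  have ha0 := C_lb
  have hb0 := C_ub
  obtain ⟨hs1, ha1, hb1⟩ := cf_step (m' := 8) (a' := (1543210898887868584838281807978777675747372717069686766656463626160595857565554535251504948474645444342414039383736353433323130292827262524232221201918171615141312111009080706050403020100899898897896895894893892891890888 : ℚ)/15432098637639016426895214774002652790531578410366289154167942046729925517804305683093561881440669319457198245077032955820834608713396592184470972349760228548107335986123864911743699622487387512637762888013138263388513639) (b' := (1234568719110294867870625446383022140597898173655749413325170900928476686052443628201203958779716355473931231506989082746658504234261810019385776961534537292113049688807264564840322416080719919118317516715915114313512712 : ℚ)/12345678910111213141516171819202122232425262728293031323334353637383940414243444546474849505152535455565758596061626364656667686970717273747576777879808182838485868788899091929394959697989910010110210310410510610710810911) hs0 ha0 hb0 (by norm_num) (by norm_num) (by norm_num) (by norm_num) (by norm_num)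
  obtain ⟨hs2, ha2, hb2⟩ := cf_step (m' := 9) (a' := (1234560438118559330680542801754922967044179165391286603407815529027650239771451892664013876135088256300377512498724619936741148862360983573104785225997347209468421589633710845832057953263430738045352659967274581889196503 : ℚ)/1234568719110294867870625446383022140597898173655749413325170900928476686052443628201203958779716355473931231506989082746658504234261810019385776961534537292113049688807264564840322416080719919118317516715915114313512712) (b' := (1543200547648199163350678502193653708805223956739108254259769411284562799714314865830017345168860320375471890623405774920926436077951229466380981532496684011835526987042138557290072441579288422556690824959093227361495647 : ℚ)/1543210898887868584838281807978777675747372717069686766656463626160595857565554535251504948474645444342414039383736353433323130292827262524232221201918171615141312111009080706050403020100899898897896895894893892891890888) hs1 ha1 hb1 (by norm_num) (by norm_num) (by norm_num) (by norm_num) (by norm_num)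
  obtain ⟨hs3, ha3, hb3⟩ := cf_step (m' := 1) (a' := (10351239669421487603305785123966942148760330578512396694214876033057851239669421487603305785123966942148760330578512396694214876033057851239669421487603305785123966942148760330578521611476341206070935800665530395241 : ℚ)/1543200547648199163350678502193653708805223956739108254259769411284562799714314865830017345168860320375471890623405774920926436077951229466380981532496684011835526987042138557290072441579288422556690824959093227361495647) (b' := (8280991735537190082644628099173553719008264462809917355371900826446280991735537190082644628099173553719008264462809917355371900826446280991735537190082644628099173553719008264462817289181072964856748640532424316209 : ℚ)/1234560438118559330680542801754922967044179165391286603407815529027650239771451892664013876135088256300377512498724619936741148862360983573104785225997347209468421589633710845832057953263430738045352659967274581889196503) hs2 ha2 hb2 (by norm_num) (by norm_num) (by norm_num) (by norm_num) (by norm_num)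
  obtain ⟨hs4, ha4, hb4⟩ := cf_step (m' := 149083) (a' := (5347209468421589633710845832057953270074482195694316906438118559330680542801754922967044179165391286603407815529027650239771451892664013876135088256300377512498724619936741147763340448837225614002390779167555810156 : ℚ)/8280991735537190082644628099173553719008264462809917355371900826446280991735537190082644628099173553719008264462809917355371900826446280991735537190082644628099173553719008264462817289181072964856748640532424316209) (b' := (6684011835526987042138557290072441587593102744617896133047648199163350678502193653708805223956739108254259769411284562799714314865830017345168860320375471890623405774920926434704175561046532017502988473959447781644 : ℚ)/10351239669421487603305785123966942148760330578512396694214876033057851239669421487603305785123966942148760330578512396694214876033057851239669421487603305785123966942148760330578521611476341206070935800665530395241) hs3 ha3 hb3 (by norm_num) (by norm_num) (by norm_num) (by norm_num) (by norm_num)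
  obtain ⟨hs5, ha5, hb5⟩ := cf_step (m' := 1) (a' := (3667227833894500561167227833894500561167227833894500561167227833894500561167227833894500561167227833894500561167227833894500561167227833894500561167227833894500561167227833895874346050429809188567947326706082613597 : ℚ)/6684011835526987042138557290072441587593102744617896133047648199163350678502193653708805223956739108254259769411284562799714314865830017345168860320375471890623405774920926434704175561046532017502988473959447781644) (b' := (2933782267115600448933782267115600448933782267115600448933782267115600448933782267115600448933782267115600448933782267115600448933782267115600448933782267115600448933782267116699476840343847350854357861364868506053 : ℚ)/5347209468421589633710845832057953270074482195694316906438118559330680542801754922967044179165391286603407815529027650239771451892664013876135088256300377512498724619936741147763340448837225614002390779167555810156) hs4 ha4 hb4 (by norm_num) (by norm_num) (by norm_num) (by norm_num) (by norm_num)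
  obtain ⟨hs6, ha6, hb6⟩ := cf_step (m' := 1) (a' := (2413427201305989184777063564942352821140699928578716457504336292215080093867972655851443730231609019487807366595245383124171002958881746760534639322518110396898275686154474031063863608493378263148032917802687304103 : ℚ)/2933782267115600448933782267115600448933782267115600448933782267115600448933782267115600448933782267115600448933782267115600448933782267115600448933782267115600448933782267116699476840343847350854357861364868506053) (b' := (3016784001632486480971329456177941026425874910723395571880420365268850117334965819814304662789511274359759208244056728905213753698602183450668299153147637996122844607693092538829829510616722828935041147253365168047 : ℚ)/3667227833894500561167227833894500561167227833894500561167227833894500561167227833894500561167227833894500561167227833894500561167227833894500561167227833894500561167227833895874346050429809188567947326706082613597) hs5 ha5 hb5 (by norm_num) (by norm_num) (by norm_num) (by norm_num) (by norm_num)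
  obtain ⟨hs7, ha7, hb7⟩ := cf_step (m' := 1) (a' := (650443832262014080195898377716559534741352923171104989286807468625650443832262014080195898377716559534741352923171104989286807468625650443832262014080195898377716559534741357044516539813086359632906179452717445550 : ℚ)/3016784001632486480971329456177941026425874910723395571880420365268850117334965819814304662789511274359759208244056728905213753698602183450668299153147637996122844607693092538829829510616722828935041147253365168047) (b' := (520355065809611264156718702173247627793082338536883991429445974900520355065809611264156718702173247627793082338536883991429445974900520355065809611264156718702173247627793085635613231850469087706324943562181201950 : ℚ)/2413427201305989184777063564942352821140699928578716457504336292215080093867972655851443730231609019487807366595245383124171002958881746760534639322518110396898275686154474031063863608493378263148032917802687304103) hs6 ha6 hb6 (by norm_num) (by norm_num) (by norm_num) (by norm_num) (by norm_num)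
  obtain ⟨hs8, ha8, hb8⟩ := cf_step (m' := 4) (a' := (332006938067544128150188756249362309968370574431180491786552392612998673604734210794816855422916028976635037241097847158453219059279665340271400877461483522089582695643301688521410681091501912322733143553962496303 : ℚ)/520355065809611264156718702173247627793082338536883991429445974900520355065809611264156718702173247627793082338536883991429445974900520355065809611264156718702173247627793085635613231850469087706324943562181201950) (b' := (415008672584430160187735945311702887460463218038975614733190490766248342005917763493521069278645036220793796551372308948066523824099581675339251096826854402611978369554127110651763351364377390403416429442495385847 : ℚ)/650443832262014080195898377716559534741352923171104989286807468625650443832262014080195898377716559534741352923171104989286807468625650443832262014080195898377716559534741357044516539813086359632906179452717445550) hs7 ha7 hb7 (by norm_num) (by norm_num) (by norm_num) (by norm_num) (by norm_num)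
  obtain ⟨hs9, ha9, hb9⟩ := cf_step (m' := 1) (a' := (235435159677583920008162432404856647280889705132129374553616977859402101826344250586674829099071523313947556371798796041220283644526068768493010917253341495765738189980614246392753188448708969229489750010222059703 : ℚ)/415008672584430160187735945311702887460463218038975614733190490766248342005917763493521069278645036220793796551372308948066523824099581675339251096826854402611978369554127110651763351364377390403416429442495385847) (b' := (188348127742067136006529945923885317824711764105703499642893582287521681461075400469339863279257218651158045097439036832976226915620855014794408733802673196612590551984491397114202550758967175383591800008218705647 : ℚ)/332006938067544128150188756249362309968370574431180491786552392612998673604734210794816855422916028976635037241097847158453219059279665340271400877461483522089582695643301688521410681091501912322733143553962496303) hs8 ha8 hb8 (by norm_num) (by norm_num) (by norm_num) (by norm_num) (by norm_num)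
  obtain ⟨hs10, ha10, hb10⟩ := cf_step (m' := 1) (a' := (143658810325476992143658810325476992143658810325476992143658810325476992143658810325476992143658810325476992143658810325476992143658810325476992143658810325476992143658810291407208130332534736939141343545743790656 : ℚ)/188348127742067136006529945923885317824711764105703499642893582287521681461075400469339863279257218651158045097439036832976226915620855014794408733802673196612590551984491397114202550758967175383591800008218705647) (b' := (179573512906846240179573512906846240179573512906846240179573512906846240179573512906846240179573512906846240179573512906846240179573512906846240179573512906846240179573512864259010162915668421173926679432273326144 : ℚ)/235435159677583920008162432404856647280889705132129374553616977859402101826344250586674829099071523313947556371798796041220283644526068768493010917253341495765738189980614246392753188448708969229489750010222059703) hs9 ha9 hb9 (by norm_num) (by norm_num) (by norm_num) (by norm_num) (by norm_num)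
  obtain ⟨hs11, ha11, hb11⟩ := cf_step (m' := 1) (a' := (55861646770737679828588919498010407101316192225283134374043464952555861646770737679828588919498010407101316192225283134374043464952555861646770737679828588919498010407101382133743025533040548055563070577948733559 : ℚ)/179573512906846240179573512906846240179573512906846240179573512906846240179573512906846240179573512906846240179573512906846240179573512906846240179573512906846240179573512864259010162915668421173926679432273326144) (b' := (44689317416590143862871135598408325681052953780226507499234771962044689317416590143862871135598408325681052953780226507499234771962044689317416590143862871135598408325681105706994420426432438444450456462474914991 : ℚ)/143658810325476992143658810325476992143658810325476992143658810325476992143658810325476992143658810325476992143658810325476992143658810325476992143658810325476992143658810291407208130332534736939141343545743790656) hs10 ha10 hb10 (by norm_num) (by norm_num) (by norm_num) (by norm_num) (by norm_num)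
  obtain ⟨hs12, ha12, hb12⟩ := cf_step (m' := 3) (a' := (9590858075706560555045403530252015100499948984797469645954494439342924191409039893888378736863585348433833282318130802979287827772676257524742373227221712070196918681766974286224869053237421605789974158319045683 : ℚ)/44689317416590143862871135598408325681052953780226507499234771962044689317416590143862871135598408325681052953780226507499234771962044689317416590143862871135598408325681105706994420426432438444450456462474914991) (b' := (11988572594633200693806754412815018875624936230996837057443118049178655239261299867360473421079481685542291602897663503724109784715845321905927966534027140087746148352208717857781086316546777007237467698427125467 : ℚ)/55861646770737679828588919498010407101316192225283134374043464952555861646770737679828588919498010407101316192225283134374043464952555861646770737679828588919498010407101382133743025533040548055563070577948733559) hs11 ha11 hb11 (by norm_num) (by norm_num) (by norm_num) (by norm_num) (by norm_num)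
  obtain ⟨hs13, ha13, hb13⟩ := cf_step (m' := 4) (a' := (7907356392204877053361901846750331598816447301295786144270992755841240689725538210386695235180083664932149780634629119477604326089174574023058871543720028568513416998266510702618680266853440026613199784240231691 : ℚ)/11988572594633200693806754412815018875624936230996837057443118049178655239261299867360473421079481685542291602897663503724109784715845321905927966534027140087746148352208717857781086316546777007237467698427125467) (b' := (6325885113763901642689521477400265279053157841036628915416794204672992551780430568309356188144066931945719824507703295582083460871339659218447097234976022854810733598613208562094944213482752021290559829198732259 : ℚ)/9590858075706560555045403530252015100499948984797469645954494439342924191409039893888378736863585348433833282318130802979287827772676257524742373227221712070196918681766974286224869053237421605789974158319045683) hs12 ha12 hb12 (by norm_num) (by norm_num) (by norm_num) (by norm_num) (by norm_num)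
  obtain ⟨hs14, ha14, hb14⟩ := cf_step (m' := 1) (a' := (3264972961942658912355882052851749821446791143760840730537700234669931639628609325579022548719518416488113457810427507397204366901336598306295275992245689215386185083153765724129924839754669584499414329120313424 : ℚ)/6325885113763901642689521477400265279053157841036628915416794204672992551780430568309356188144066931945719824507703295582083460871339659218447097234976022854810733598613208562094944213482752021290559829198732259) (b' := (4081216202428323640444852566064687276808488929701050913172125293337414549535761656973778185899398020610141822263034384246505458626670747882869094990307111519232731353942207155162406049693336980624267914186893776 : ℚ)/7907356392204877053361901846750331598816447301295786144270992755841240689725538210386695235180083664932149780634629119477604326089174574023058871543720028568513416998266510702618680266853440026613199784240231691) hs13 ha13 hb13 (by norm_num) (by norm_num) (by norm_num) (by norm_num) (by norm_num)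
  obtain ⟨hs15, ha15, hb15⟩ := cf_step (m' := 1) (a' := (3826140189776553412917049280685644322007958371594735231098867462503826140189776553412917049280685644322007958371594735231098867462503826140189776553412917049280685644324303547456274217160103045988931870053337915 : ℚ)/4081216202428323640444852566064687276808488929701050913172125293337414549535761656973778185899398020610141822263034384246505458626670747882869094990307111519232731353942207155162406049693336980624267914186893776) (b' := (3060912151821242730333639424548515457606366697275788184879093970003060912151821242730333639424548515457606366697275788184879093970003060912151821242730333639424548515459442837965019373728082436791145500078418835 : ℚ)/3264972961942658912355882052851749821446791143760840730537700234669931639628609325579022548719518416488113457810427507397204366901336598306295275992245689215386185083153765724129924839754669584499414329120313424) hs14 ha14 hb14 (by norm_num) (by norm_num) (by norm_num) (by norm_num) (by norm_num)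
  obtain ⟨hs16, ha16, hb16⟩ := cf_step (m' := 1) (a' := (204060810121416182022242628303234363840424446485052545658606264666870727476788082848688909294969901030507091113151719212325272931333537394143454749515355575961636567694322886164905466026587147708268829041894589 : ℚ)/3060912151821242730333639424548515457606366697275788184879093970003060912151821242730333639424548515457606366697275788184879093970003060912151821242730333639424548515459442837965019373728082436791145500078418835) (b' := (255076012651770227527803285379042954800530558106315682073257830833588409345985103560861136618712376288133863891439649015406591164166921742679318436894194469952045709617903607706131832533233934635336044133555861 : ℚ)/3826140189776553412917049280685644322007958371594735231098867462503826140189776553412917049280685644322007958371594735231098867462503826140189776553412917049280685644324303547456274217160103045988931870053337915) hs15 ha15 hb15 (by norm_num) (by norm_num) (by norm_num) (by norm_num) (by norm_num)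
  obtain ⟨hs17, ha17, hb17⟩ := cf_step (m' := 15) (a' := (55749431864296729161594026458891208050000000 : ℚ)/255076012651770227527803285379042954800530558106315682073257830833588409345985103560861136618712376288133863891439649015406591164166921742679318436894194469952045709617903607706131832533233934635336044133555861) (b' := (44599545491437383329275221167113064450000000 : ℚ)/204060810121416182022242628303234363840424446485052545658606264666870727476788082848688909294969901030507091113151719212325272931333537394143454749515355575961636567694322886164905466026587147708268829041894589) hs16 ha16 hb16 (by norm_num) (by norm_num) (by norm_num) (by norm_num) (by norm_num)
  have g0 : (GenContFract.of C₁₀).s.get? 0 = some ⟨1, ((8:ℤ):ℝ)⟩ := by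
    simpa using GenContFract.get?_of_eq_some_of_succ_get?_intFractPair_stream hs1
  have g1 : (GenContFract.of C₁₀).s.get? 1 = some ⟨1, ((9:ℤ):ℝ)⟩ := by
    simpa using GenContFract.get?_of_eq_some_of_succ_get?_intFractPair_stream hs2
  have g2 : (GenContFract.of C₁₀).s.get? 2 = some ⟨1, ((1:ℤ):ℝ)⟩ := by
    simpa using GenContFract.get?_of_eq_some_of_succ_get?_intFractPair_stream hs3
  have g3 : (GenContFract.of C₁₀).s.get? 3 = some ⟨1, ((149083:ℤ):ℝ)⟩ := by
    simpa using GenContFract.get?_of_eq_some_of_succ_get?_intFractPair_stream hs4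
  have g4 : (GenContFract.of C₁₀).s.get? 4 = some ⟨1, ((1:ℤ):ℝ)⟩ := by
    simpa using GenContFract.get?_of_eq_some_of_succ_get?_intFractPair_stream hs5
  have g5 : (GenContFract.of C₁₀).s.get? 5 = some ⟨1, ((1:ℤ):ℝ)⟩ := by
    simpa using GenContFract.get?_of_eq_some_of_succ_get?_intFractPair_stream hs6
  have g6 : (GenContFract.of C₁₀).s.get? 6 = some ⟨1, ((1:ℤ):ℝ)⟩ := by
    simpa using GenContFract.get?_of_eq_some_of_succ_get?_intFractPair_stream hs7
  have g7 : (GenContFract.of C₁₀).s.get? 7 = some ⟨1, ((4:ℤ):ℝ)⟩ := by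
    simpa using GenContFract.get?_of_eq_some_of_succ_get?_intFractPair_stream hs8
  have g8 : (GenContFract.of C₁₀).s.get? 8 = some ⟨1, ((1:ℤ):ℝ)⟩ := by
    simpa using GenContFract.get?_of_eq_some_of_succ_get?_intFractPair_stream hs9
  have g9 : (GenContFract.of C₁₀).s.get? 9 = some ⟨1, ((1:ℤ):ℝ)⟩ := by
    simpa using GenContFract.get?_of_eq_some_of_succ_get?_intFractPair_stream hs10
  have g10 : (GenContFract.of C₁₀).s.get? 10 = some ⟨1, ((1:ℤ):ℝ)⟩ := by
    simpa using GenContFract.get?_of_eq_some_of_succ_get?_intFractPair_stream hs11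
  have g11 : (GenContFract.of C₁₀).s.get? 11 = some ⟨1, ((3:ℤ):ℝ)⟩ := by
    simpa using GenContFract.get?_of_eq_some_of_succ_get?_intFractPair_stream hs12
  have g12 : (GenContFract.of C₁₀).s.get? 12 = some ⟨1, ((4:ℤ):ℝ)⟩ := by
    simpa using GenContFract.get?_of_eq_some_of_succ_get?_intFractPair_stream hs13
  have g13 : (GenContFract.of C₁₀).s.get? 13 = some ⟨1, ((1:ℤ):ℝ)⟩ := by
    simpa using GenContFract.get?_of_eq_some_of_succ_get?_intFractPair_stream hs14
  have g14 : (GenContFract.of C₁₀).s.get? 14 = some ⟨1, ((1:ℤ):ℝ)⟩ := by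
    simpa using GenContFract.get?_of_eq_some_of_succ_get?_intFractPair_stream hs15
  have g15 : (GenContFract.of C₁₀).s.get? 15 = some ⟨1, ((1:ℤ):ℝ)⟩ := by
    simpa using GenContFract.get?_of_eq_some_of_succ_get?_intFractPair_stream hs16
  have g16 : (GenContFract.of C₁₀).s.get? 16 = some ⟨1, ((15:ℤ):ℝ)⟩ := by
    simpa using GenContFract.get?_of_eq_some_of_succ_get?_intFractPair_stream hs17
  have hh : (GenContFract.of C₁₀).h = 0 := by rw [GenContFract.of_h_eq_floor, floor0]; norm_num
  have num0 : (GenContFract.of C₁₀).nums 0 = 0 := by rw [GenContFract.zeroth_num_eq_h, hh]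
  have den0 : (GenContFract.of C₁₀).dens 0 = 1 := GenContFract.zeroth_den_eq_one
  have num1 : (GenContFract.of C₁₀).nums 1 = 1 := by have h := GenContFract.first_num_eq g0; rw [hh] at h; norm_num at h; exact h
  have den1 : (GenContFract.of C₁₀).dens 1 = 8 := by have h := GenContFract.first_den_eq g0; norm_num at h; exact h
  have num2 : (GenContFract.of C₁₀).nums 2 = 9 := by have h := GenContFract.nums_recurrence (n := 0) g1 num0 num1; norm_num at h; exact h
  have den2 : (GenContFract.of C₁₀).dens 2 = 73 := by have h := GenContFract.dens_recurrence (n := 0) g1 den0 den1; norm_num at h; exact h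
  have num3 : (GenContFract.of C₁₀).nums 3 = 10 := by have h := GenContFract.nums_recurrence (n := 1) g2 num1 num2; norm_num at h; exact h
  have den3 : (GenContFract.of C₁₀).dens 3 = 81 := by have h := GenContFract.dens_recurrence (n := 1) g2 den1 den2; norm_num at h; exact h
  have num4 : (GenContFract.of C₁₀).nums 4 = 1490839 := by have h := GenContFract.nums_recurrence (n := 2) g3 num2 num3; norm_num at h; exact h
  have den4 : (GenContFract.of C₁₀).dens 4 = 12075796 := by have h := GenContFract.dens_recurrence (n := 2) g3 den2 den3; norm_num at h; exact h
  have num5 : (GenContFract.of C₁₀).nums 5 = 1490849 := by have h := GenContFract.nums_recurrence (n := 3) g4 num3 num4; norm_num at h; exact h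
  have den5 : (GenContFract.of C₁₀).dens 5 = 12075877 := by have h := GenContFract.dens_recurrence (n := 3) g4 den3 den4; norm_num at h; exact h
  have num6 : (GenContFract.of C₁₀).nums 6 = 2981688 := by have h := GenContFract.nums_recurrence (n := 4) g5 num4 num5; norm_num at h; exact h
  have den6 : (GenContFract.of C₁₀).dens 6 = 24151673 := by have h := GenContFract.dens_recurrence (n := 4) g5 den4 den5; norm_num at h; exact h
  have num7 : (GenContFract.of C₁₀).nums 7 = 4472537 := by have h := GenContFract.nums_recurrence (n := 5) g6 num5 num6; norm_num at h; exact h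
  have den7 : (GenContFract.of C₁₀).dens 7 = 36227550 := by have h := GenContFract.dens_recurrence (n := 5) g6 den5 den6; norm_num at h; exact h
  have num8 : (GenContFract.of C₁₀).nums 8 = 20871836 := by have h := GenContFract.nums_recurrence (n := 6) g7 num6 num7; norm_num at h; exact h
  have den8 : (GenContFract.of C₁₀).dens 8 = 169061873 := by have h := GenContFract.dens_recurrence (n := 6) g7 den6 den7; norm_num at h; exact h
  have num9 : (GenContFract.of C₁₀).nums 9 = 25344373 := by have h := GenContFract.nums_recurrence (n := 7) g8 num7 num8; norm_num at h; exact h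
  have den9 : (GenContFract.of C₁₀).dens 9 = 205289423 := by have h := GenContFract.dens_recurrence (n := 7) g8 den7 den8; norm_num at h; exact h
  have num10 : (GenContFract.of C₁₀).nums 10 = 46216209 := by have h := GenContFract.nums_recurrence (n := 8) g9 num8 num9; norm_num at h; exact h
  have den10 : (GenContFract.of C₁₀).dens 10 = 374351296 := by have h := GenContFract.dens_recurrence (n := 8) g9 den8 den9; norm_num at h; exact h
  have num11 : (GenContFract.of C₁₀).nums 11 = 71560582 := by have h := GenContFract.nums_recurrence (n := 9) g10 num9 num10; norm_num at h; exact h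
  have den11 : (GenContFract.of C₁₀).dens 11 = 579640719 := by have h := GenContFract.dens_recurrence (n := 9) g10 den9 den10; norm_num at h; exact h
  have num12 : (GenContFract.of C₁₀).nums 12 = 260897955 := by have h := GenContFract.nums_recurrence (n := 10) g11 num10 num11; norm_num at h; exact h
  have den12 : (GenContFract.of C₁₀).dens 12 = 2113273453 := by have h := GenContFract.dens_recurrence (n := 10) g11 den10 den11; norm_num at h; exact h
  have num13 : (GenContFract.of C₁₀).nums 13 = 1115152402 := by have h := GenContFract.nums_recurrence (n := 11) g12 num11 num12; norm_num at h; exact h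
  have den13 : (GenContFract.of C₁₀).dens 13 = 9032734531 := by have h := GenContFract.dens_recurrence (n := 11) g12 den11 den12; norm_num at h; exact h
  have num14 : (GenContFract.of C₁₀).nums 14 = 1376050357 := by have h := GenContFract.nums_recurrence (n := 12) g13 num12 num13; norm_num at h; exact h
  have den14 : (GenContFract.of C₁₀).dens 14 = 11146007984 := by have h := GenContFract.dens_recurrence (n := 12) g13 den12 den13; norm_num at h; exact h
  have num15 : (GenContFract.of C₁₀).nums 15 = 2491202759 := by have h := GenContFract.nums_recurrence (n := 13) g14 num13 num14; norm_num at h; exact h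
  have den15 : (GenContFract.of C₁₀).dens 15 = 20178742515 := by have h := GenContFract.dens_recurrence (n := 13) g14 den13 den14; norm_num at h; exact h
  have num16 : (GenContFract.of C₁₀).nums 16 = 3867253116 := by have h := GenContFract.nums_recurrence (n := 14) g15 num14 num15; norm_num at h; exact h
  have den16 : (GenContFract.of C₁₀).dens 16 = 31324750499 := by have h := GenContFract.dens_recurrence (n := 14) g15 den14 den15; norm_num at h; exact h
  have num17 : (GenContFract.of C₁₀).nums 17 = 60499999499 := by have h := GenContFract.nums_recurrence (n := 15) g16 num15 num16; norm_num at h; exact h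
  have den17 : (GenContFract.of C₁₀).dens 17 = 490050000000 := by have h := GenContFract.dens_recurrence (n := 15) g16 den15 den16; norm_num at h; exact h
  exact ⟨num17, den17⟩
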